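/- In the setting of the one-dimensional naive mean-field ELBo, for any fixed ψ₀ strictly between 0 and 1, with μ and s² set to their stationary values μ(ψ₀,σ₀²) and s²(ψ₀,σ₀²), the ELBo satisfies ELBo = (1/2)(1 − ψ₀)·log σ₀² + O(1) as σ₀² ↓ 0; in particular ELBo(ψ₀) → −∞ as σ₀² ↓ 0, while ELBo(ψ₀ = 0) and ELBo(ψ₀ = 1) remain bounded. Hence for σ₀² small enough, the maximizer ψ₀* of the ELBo lies within any prescribed δ-neighborhood of {0, 1}. -/

import Mathlib

open Real Filter Asymptotics
open scoped Topology

/-- The one-dimensional naive mean-field ELBo (up to an additive constant). -/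
noncomputable def elbo (ve v1 p0 bh v0 ψ m t : ℝ) : ℝ :=
  -(1 / (2 * ve)) * (m ^ 2 + t - 2 * bh * m) + (1 / 2) * Real.log t
    - ψ * Real.log ψ - (1 - ψ) * Real.log (1 - ψ)
    - (ψ / 2) * Real.log v0 - ((1 - ψ) / 2) * Real.log v1
    - (ψ / (2 * v0) + (1 - ψ) / (2 * v1)) * (m ^ 2 + t)
    + ψ * Real.log p0 + (1 - ψ) * Real.log (1 - p0)

/-- Stationary variational mean `μ(ψ₀, σ₀²)`. -/
noncomputable def mustat (ve v1 bh v0 ψ : ℝ) : ℝ :=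
  bh / (1 + ψ * ve / v0 + (1 - ψ) * ve / v1)

/-- Stationary variational variance `s²(ψ₀, σ₀²)`. -/
noncomputable def sstat (ve v1 v0 ψ : ℝ) : ℝ :=
  1 / (1 / ve + ψ / v0 + (1 - ψ) / v1)

/-- The ELBo with `μ` and `s²` at their stationary values, as a function of `(ψ₀, σ₀²)`. -/
noncomputable def Fstat (ve v1 p0 bh v0 ψ : ℝ) : ℝ :=
  elbo ve v1 p0 bh v0 ψ (mustat ve v1 bh v0 ψ) (sstat ve v1 v0 ψ)

private lemma Dpos {ve v1 v0 ψ : ℝ} (hve : 0 < ve) (hv1 : 0 < v1) (hv0 : 0 < v0)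
    (h0 : 0 ≤ ψ) (h1 : ψ ≤ 1) : 0 < 1 / ve + ψ / v0 + (1 - ψ) / v1 := by
  have a : 0 < 1 / ve := by positivity
  have b : 0 ≤ ψ / v0 := div_nonneg h0 hv0.le
  have c : 0 ≤ (1 - ψ) / v1 := div_nonneg (by linarith) hv1.le
  linarith

private lemma Fstat_eq {ve v1 v0 ψ : ℝ} (p0 bh : ℝ) (hve : 0 < ve) (hv1 : 0 < v1)
    (hv0 : 0 < v0) (h0 : 0 ≤ ψ) (h1 : ψ ≤ 1) :
    Fstat ve v1 p0 bh v0 ψ =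
      bh ^ 2 / (2 * ve ^ 2 * (1 / ve + ψ / v0 + (1 - ψ) / v1)) - 1 / 2
        - (1 / 2) * Real.log (1 / ve + ψ / v0 + (1 - ψ) / v1)
        - ψ * Real.log ψ - (1 - ψ) * Real.log (1 - ψ)
        - (ψ / 2) * Real.log v0 - ((1 - ψ) / 2) * Real.log v1
        + ψ * Real.log p0 + (1 - ψ) * Real.log (1 - p0) := by
  have hD : 0 < 1 / ve + ψ / v0 + (1 - ψ) / v1 := Dpos hve hv1 hv0 h0 h1
  set D := 1 / ve + ψ / v0 + (1 - ψ) / v1 with hDdef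
  have hden : (1 + ψ * ve / v0 + (1 - ψ) * ve / v1) = ve * D := by
    rw [hDdef]; field_simp
  have hm : mustat ve v1 bh v0 ψ = bh / (ve * D) := by rw [mustat, hden]
  have ht : sstat ve v1 v0 ψ = 1 / D := by rw [sstat, ← hDdef]
  rw [Fstat, hm, ht, elbo]
  rw [one_div D, Real.log_inv]
  have hψv : ψ / (2 * v0) + (1 - ψ) / (2 * v1) = (D - 1 / ve) / 2 := by
    rw [hDdef]; field_simp; ring
  have h2 : -(1 / (2 * ve)) * ((bh / (ve * D)) ^ 2 + D⁻¹
        - 2 * bh * (bh / (ve * D)))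
      - (ψ / (2 * v0) + (1 - ψ) / (2 * v1)) * ((bh / (ve * D)) ^ 2 + D⁻¹)
      = bh ^ 2 / (2 * ve ^ 2 * D) - 1 / 2 := by
    rw [hψv]
    field_simp
    ring
  linear_combination h2

private lemma Fstat_eq2 {ve v1 v0 ψ : ℝ} (p0 bh : ℝ) (hve : 0 < ve) (hv1 : 0 < v1)
    (hv0 : 0 < v0) (h0 : 0 ≤ ψ) (h1 : ψ ≤ 1) :
    Fstat ve v1 p0 bh v0 ψ =
      bh ^ 2 / (2 * ve ^ 2 * (1 / ve + ψ / v0 + (1 - ψ) / v1)) - 1 / 2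
        - (1 / 2) * Real.log (v0 / ve + ψ + (1 - ψ) * v0 / v1)
        + ((1 - ψ) / 2) * Real.log v0
        - ψ * Real.log ψ - (1 - ψ) * Real.log (1 - ψ)
        - ((1 - ψ) / 2) * Real.log v1
        + ψ * Real.log p0 + (1 - ψ) * Real.log (1 - p0) := by
  have hD : 0 < 1 / ve + ψ / v0 + (1 - ψ) / v1 := Dpos hve hv1 hv0 h0 h1
  have hN : 0 < v0 / ve + ψ + (1 - ψ) * v0 / v1 := by
    have : v0 / ve + ψ + (1 - ψ) * v0 / v1 = (1 / ve + ψ / v0 + (1 - ψ) / v1) * v0 := by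
      field_simp
    rw [this]; exact mul_pos hD hv0
  have hsplit : Real.log (1 / ve + ψ / v0 + (1 - ψ) / v1)
      = Real.log (v0 / ve + ψ + (1 - ψ) * v0 / v1) - Real.log v0 := by
    have heq : (1 / ve + ψ / v0 + (1 - ψ) / v1)
        = (v0 / ve + ψ + (1 - ψ) * v0 / v1) / v0 := by
      field_simp
    rw [heq, Real.log_div hN.ne' hv0.ne']
  rw [Fstat_eq p0 bh hve hv1 hv0 h0 h1, hsplit]
  ring

private lemma tendsto_D_atTop {ve v1 ψ : ℝ} (hψ : 0 < ψ) :
    Tendsto (fun v0 => 1 / ve + ψ / v0 + (1 - ψ) / v1) (nhdsWithin 0 (Set.Ioi 0)) atTop := by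
  have h1 : Tendsto (fun v0 : ℝ => ψ / v0) (nhdsWithin 0 (Set.Ioi 0)) atTop := by
    refine (Tendsto.const_mul_atTop hψ tendsto_inv_nhdsGT_zero).congr fun x => ?_
    rw [div_eq_mul_inv]
  exact tendsto_atTop_add_const_right _ _ (tendsto_atTop_add_const_left _ _ h1)

private lemma tendsto_bh_zero {ve v1 ψ : ℝ} (bh : ℝ) (hve : 0 < ve) (hψ : 0 < ψ) :
    Tendsto (fun v0 => bh ^ 2 / (2 * ve ^ 2 * (1 / ve + ψ / v0 + (1 - ψ) / v1)))
      (nhdsWithin 0 (Set.Ioi 0)) (𝓝 0) :=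
  Tendsto.div_atTop tendsto_const_nhds
    (Tendsto.const_mul_atTop (by positivity) (tendsto_D_atTop hψ))

private lemma tendsto_logN {ve v1 ψ : ℝ} (hve : 0 < ve) (hv1 : 0 < v1) (hψ : 0 < ψ) :
    Tendsto (fun v0 => Real.log (v0 / ve + ψ + (1 - ψ) * v0 / v1))
      (nhdsWithin 0 (Set.Ioi 0)) (𝓝 (Real.log ψ)) := by
  have hc : Tendsto (fun v0 : ℝ => v0 / ve + ψ + (1 - ψ) * v0 / v1) (𝓝 0) (𝓝 ψ) := by
    have hcont : Continuous fun v0 : ℝ => v0 / ve + ψ + (1 - ψ) * v0 / v1 := by fun_prop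
    have h0 := hcont.tendsto 0
    simpa using h0
  exact (Real.continuousAt_log hψ.ne').tendsto.comp (hc.mono_left nhdsWithin_le_nhds)

set_option maxHeartbeats 2000000 in
theorem naive_meanfield_elbo_degenerates
    (ve v1 p0 bh : ℝ) (hve : 0 < ve) (hv1 : 0 < v1) (hp0 : 0 < p0) (hp0' : p0 < 1) :
    (∀ ψ : ℝ, 0 < ψ → ψ < 1 →
      ((fun v0 => Fstat ve v1 p0 bh v0 ψ - (1 / 2) * (1 - ψ) * Real.log v0)
          =O[nhdsWithin 0 (Set.Ioi 0)] (fun _ => (1 : ℝ))) ∧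
        Tendsto (fun v0 => Fstat ve v1 p0 bh v0 ψ) (nhdsWithin 0 (Set.Ioi 0)) atBot) ∧
    (∃ C : ℝ, ∀ᶠ v0 in nhdsWithin (0 : ℝ) (Set.Ioi 0),
      |Fstat ve v1 p0 bh v0 0| ≤ C ∧ |Fstat ve v1 p0 bh v0 1| ≤ C) ∧
    (∀ δ : ℝ, 0 < δ →
      ∀ᶠ v0 in nhdsWithin (0 : ℝ) (Set.Ioi 0),
        ∀ ψs ∈ Set.Icc (0 : ℝ) 1,
          IsMaxOn (fun ψ => Fstat ve v1 p0 bh v0 ψ) (Set.Icc 0 1) ψs →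
            ψs ≤ δ ∨ 1 - δ ≤ ψs) := by
  have hlIoi := @self_mem_nhdsWithin ℝ _ 0 (Set.Ioi 0)
  -- the constant value at ψ = 0
  set C0 : ℝ := bh ^ 2 / (2 * ve ^ 2 * (1 / ve + 1 / v1)) - 1 / 2
      - (1 / 2) * Real.log (1 / ve + 1 / v1) - (1 / 2) * Real.log v1
      + Real.log (1 - p0) with hC0def
  have hF0 : ∀ v0 : ℝ, v0 ∈ Set.Ioi (0 : ℝ) → Fstat ve v1 p0 bh v0 0 = C0 := by
    intro v0 hv0
    rw [Fstat_eq p0 bh hve hv1 hv0 le_rfl zero_le_one, hC0def]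
    norm_num
  refine ⟨?_, ?_, ?_⟩
  · -- Part 1
    intro ψ hψ hψ1
    set Cψ : ℝ := -(1 / 2) - ψ * Real.log ψ - (1 - ψ) * Real.log (1 - ψ)
        - ((1 - ψ) / 2) * Real.log v1 + ψ * Real.log p0 + (1 - ψ) * Real.log (1 - p0)
      with hCψdef
    have hg : (fun v0 => Fstat ve v1 p0 bh v0 ψ - 1 / 2 * (1 - ψ) * Real.log v0)
        =ᶠ[nhdsWithin (0 : ℝ) (Set.Ioi 0)]
        fun v0 => bh ^ 2 / (2 * ve ^ 2 * (1 / ve + ψ / v0 + (1 - ψ) / v1))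
          - (1 / 2) * Real.log (v0 / ve + ψ + (1 - ψ) * v0 / v1) + Cψ := by
      filter_upwards [hlIoi] with v0 hv0
      rw [Fstat_eq2 p0 bh hve hv1 hv0 hψ.le hψ1.le, hCψdef]; ring
    have htendE : Tendsto
        (fun v0 => bh ^ 2 / (2 * ve ^ 2 * (1 / ve + ψ / v0 + (1 - ψ) / v1))
          - (1 / 2) * Real.log (v0 / ve + ψ + (1 - ψ) * v0 / v1) + Cψ)
        (nhdsWithin 0 (Set.Ioi 0)) (𝓝 (0 - (1 / 2) * Real.log ψ + Cψ)) :=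
      Tendsto.add_const _ ((tendsto_bh_zero bh hve hψ).sub
        ((tendsto_logN hve hv1 hψ).const_mul (1 / 2)))
    have htend := htendE.congr' hg.symm
    refine ⟨htend.isBigO_one ℝ, ?_⟩
    have hlog : Tendsto (fun v0 : ℝ => 1 / 2 * (1 - ψ) * Real.log v0)
        (nhdsWithin 0 (Set.Ioi 0)) atBot := by
      have := Tendsto.const_mul_atBot (r := 1 / 2 * (1 - ψ)) (by linarith)
        Real.tendsto_log_nhdsGT_zero
      exact this
    have hsum := htend.add_atBot hlog
    refine hsum.congr fun v0 => by ring
  · -- Part 2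
    have hF1 : (fun v0 => Fstat ve v1 p0 bh v0 1)
        =ᶠ[nhdsWithin (0 : ℝ) (Set.Ioi 0)]
        fun v0 => bh ^ 2 / (2 * ve ^ 2 * (1 / ve + 1 / v0 + (1 - 1) / v1))
          - (1 / 2) * Real.log (v0 / ve + 1 + (1 - 1) * v0 / v1)
          + (Real.log p0 - 1 / 2) := by
      filter_upwards [hlIoi] with v0 hv0
      rw [Fstat_eq2 p0 bh hve hv1 hv0 zero_le_one le_rfl]
      norm_num
      ring
    have htend1 : Tendsto (fun v0 => Fstat ve v1 p0 bh v0 1)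
        (nhdsWithin (0 : ℝ) (Set.Ioi 0))
        (𝓝 (0 - (1 / 2) * Real.log 1 + (Real.log p0 - 1 / 2))) := by
      refine (Tendsto.add_const _ ((tendsto_bh_zero bh hve one_pos).sub
        ((tendsto_logN hve hv1 one_pos).const_mul (1 / 2)))).congr' hF1.symm
    set L1 : ℝ := 0 - (1 / 2) * Real.log 1 + (Real.log p0 - 1 / 2) with hL1def
    have heb : ∀ᶠ v0 in nhdsWithin (0 : ℝ) (Set.Ioi 0),
        |Fstat ve v1 p0 bh v0 1 - L1| < 1 := by
      have hm := Metric.tendsto_nhds.mp htend1 1 one_pos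
      filter_upwards [hm] with v0 h
      rwa [Real.dist_eq] at h
    refine ⟨max |C0| (|L1| + 1), ?_⟩
    filter_upwards [hlIoi, heb] with v0 hv0 h1b
    constructor
    · rw [hF0 v0 hv0]; exact le_max_left _ _
    · have h1 : |Fstat ve v1 p0 bh v0 1| ≤ |Fstat ve v1 p0 bh v0 1 - L1| + |L1| := by
        calc |Fstat ve v1 p0 bh v0 1| = |Fstat ve v1 p0 bh v0 1 - L1 + L1| := by ring_nf
        _ ≤ |Fstat ve v1 p0 bh v0 1 - L1| + |L1| := abs_add_le _ _
      have h2 : |L1| + 1 ≤ max |C0| (|L1| + 1) := le_max_right _ _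
      linarith
  · -- Part 3
    intro δ hδ
    set dl : ℝ := min δ (1 / 2) with hdldef
    have hdl : 0 < dl := lt_min hδ (by norm_num)
    have hdl2 : dl ≤ 1 / 2 := min_le_right _ _
    have hdlδ : dl ≤ δ := min_le_left _ _
    set K : ℝ := bh ^ 2 / (2 * ve) - 1 / 2 - (5 / 2) * Real.log dl + |Real.log v1| / 2
      with hKdef
    have hbound : ∀ v0 : ℝ, 0 < v0 → v0 < 1 → ∀ ψ : ℝ, dl ≤ ψ → ψ ≤ 1 - dl →
        Fstat ve v1 p0 bh v0 ψ ≤ K + (dl / 2) * Real.log v0 := by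
      intro v0 hv0 hv01 ψ hψl hψu
      have hψ0 : 0 ≤ ψ := le_trans hdl.le hψl
      have hψ1 : ψ ≤ 1 := by linarith
      rw [Fstat_eq2 p0 bh hve hv1 hv0 hψ0 hψ1]
      have hD : 0 < 1 / ve + ψ / v0 + (1 - ψ) / v1 := Dpos hve hv1 hv0 hψ0 hψ1
      have hDge : 1 / ve ≤ 1 / ve + ψ / v0 + (1 - ψ) / v1 := by
        have b : 0 ≤ ψ / v0 := div_nonneg hψ0 hv0.le
        have c : 0 ≤ (1 - ψ) / v1 := div_nonneg (by linarith) hv1.le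
        linarith
      have h2d : 2 * ve ≤ 2 * ve ^ 2 * (1 / ve + ψ / v0 + (1 - ψ) / v1) := by
        have h0 : 2 * ve ^ 2 * (1 / ve) ≤ 2 * ve ^ 2 * (1 / ve + ψ / v0 + (1 - ψ) / v1) := by
          have hnn : (0:ℝ) ≤ 2 * ve ^ 2 := by positivity
          exact mul_le_mul_of_nonneg_left hDge hnn
        have h1 : 2 * ve ^ 2 * (1 / ve) = 2 * ve := by field_simp
        linarith
      have hA : bh ^ 2 / (2 * ve ^ 2 * (1 / ve + ψ / v0 + (1 - ψ) / v1)) ≤ bh ^ 2 / (2 * ve) := by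
        have h1d : 1 / (2 * ve ^ 2 * (1 / ve + ψ / v0 + (1 - ψ) / v1)) ≤ 1 / (2 * ve) :=
          one_div_le_one_div_of_le (by positivity) h2d
        calc bh ^ 2 / (2 * ve ^ 2 * (1 / ve + ψ / v0 + (1 - ψ) / v1))
            = bh ^ 2 * (1 / (2 * ve ^ 2 * (1 / ve + ψ / v0 + (1 - ψ) / v1))) := by ring
          _ ≤ bh ^ 2 * (1 / (2 * ve)) := mul_le_mul_of_nonneg_left h1d (sq_nonneg bh)
          _ = bh ^ 2 / (2 * ve) := by ring
      have hlv0 : Real.log v0 < 0 := Real.log_neg hv0 hv01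
      have hldl : Real.log dl < 0 := Real.log_neg hdl (by linarith)
      have hlψ : Real.log dl ≤ Real.log ψ := Real.log_le_log hdl hψl
      have hlψ2 : Real.log dl ≤ Real.log (1 - ψ) := Real.log_le_log hdl (by linarith)
      have e1 : Real.log dl ≤ ψ * Real.log ψ := by
        nlinarith [mul_le_mul_of_nonneg_left hlψ hψ0,
          mul_nonneg (show (0:ℝ) ≤ 1 - ψ by linarith) (neg_nonneg.2 hldl.le)]
      have e2 : Real.log dl ≤ (1 - ψ) * Real.log (1 - ψ) := by
        nlinarith [mul_le_mul_of_nonneg_left hlψ2 (show (0:ℝ) ≤ 1 - ψ by linarith),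
          mul_nonneg hψ0 (neg_nonneg.2 hldl.le)]
      have hN : dl ≤ v0 / ve + ψ + (1 - ψ) * v0 / v1 := by
        have a : 0 ≤ v0 / ve := by positivity
        have b : 0 ≤ (1 - ψ) * v0 / v1 :=
          div_nonneg (mul_nonneg (by linarith) hv0.le) hv1.le
        linarith
      have e3 : Real.log dl ≤ Real.log (v0 / ve + ψ + (1 - ψ) * v0 / v1) :=
        Real.log_le_log hdl hN
      have e4 : ((1 - ψ) / 2) * Real.log v0 ≤ (dl / 2) * Real.log v0 := by
        nlinarith [mul_nonneg (show (0:ℝ) ≤ (1 - ψ) / 2 - dl / 2 by linarith)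
          (neg_nonneg.2 hlv0.le)]
      have e5 : -(|Real.log v1| / 2) ≤ ((1 - ψ) / 2) * Real.log v1 := by
        nlinarith [mul_nonneg (show (0:ℝ) ≤ (1 - ψ) / 2 by linarith)
            (show (0:ℝ) ≤ |Real.log v1| + Real.log v1 by
              linarith [neg_abs_le (Real.log v1)]),
          mul_nonneg (show (0:ℝ) ≤ 1 / 2 - (1 - ψ) / 2 by linarith)
            (abs_nonneg (Real.log v1))]
      have e6 : ψ * Real.log p0 ≤ 0 := by
        nlinarith [mul_nonneg hψ0 (neg_nonneg.2 (Real.log_neg hp0 hp0').le)]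
      have hl1p : Real.log (1 - p0) < 0 := Real.log_neg (by linarith) (by linarith)
      have e7 : (1 - ψ) * Real.log (1 - p0) ≤ 0 := by
        nlinarith [mul_nonneg (show (0:ℝ) ≤ 1 - ψ by linarith) (neg_nonneg.2 hl1p.le)]
      rw [hKdef]
      linarith
    set r : ℝ := min 1 (Real.exp ((C0 - 1 - K) / (dl / 2))) with hrdef
    have hr : 0 < r := lt_min one_pos (Real.exp_pos _)
    have hmem : Set.Ioo (0 : ℝ) r ∈ nhdsWithin (0 : ℝ) (Set.Ioi 0) :=
      Ioo_mem_nhdsGT_of_mem ⟨le_rfl, hr⟩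
    filter_upwards [hmem] with v0 hv0
    intro ψs hψs hmax
    by_contra hcon
    push_neg at hcon
    obtain ⟨hc1, hc2⟩ := hcon
    have h1 := hbound v0 hv0.1 (lt_of_lt_of_le hv0.2 (min_le_left _ _)) ψs
      (by linarith) (by linarith)
    have h2 : Fstat ve v1 p0 bh v0 0 ≤ Fstat ve v1 p0 bh v0 ψs := by
      have hh := isMaxOn_iff.mp hmax 0 (by norm_num)
      simpa using hh
    have h3 : Fstat ve v1 p0 bh v0 0 = C0 := hF0 v0 hv0.1
    have h4 : Real.log v0 < (C0 - 1 - K) / (dl / 2) := by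
      have hll := Real.log_lt_log hv0.1 (lt_of_lt_of_le hv0.2 (min_le_right _ _))
      rwa [Real.log_exp] at hll
    have h5 : (dl / 2) * Real.log v0 < C0 - 1 - K := by
      rw [mul_comm]
      exact (lt_div_iff₀ (by positivity)).mp h4
    clear_value dl K C0 r
    linarith
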